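/- Let r > 0, x ∈ ℝ^d, and let Σ be a nonempty compact subset of the sphere ∂B(x,r). Then for every s in the convex hull of Σ, the open ball of center s and radius |s − x| is contained in the set {y ∈ ℝ^d : d(y, Σ) < r}. -/

import Mathlib

theorem ball_subset_sublevel_of_convexHull_sphere {d : ℕ}
    (r : ℝ) (hr : 0 < r) (x : EuclideanSpace ℝ (Fin d))
    (S : Set (EuclideanSpace ℝ (Fin d))) (hne : S.Nonempty) (hcomp : IsCompact S)
    (hsub : S ⊆ Metric.sphere x r) :
    ∀ s ∈ convexHull ℝ S,
      Metric.ball s (dist s x) ⊆ {y | Metric.infDist y S < r} := by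
  intro s hs y hy
  rw [Metric.mem_ball, dist_eq_norm, dist_eq_norm] at hy
  -- key inequality from ball membership
  have hkey : ‖y - x‖ ^ 2 < 2 * (inner ℝ (y - x) (s - x) : ℝ) := by
    have h1 : ‖(y - x) - (s - x)‖ ^ 2 < ‖s - x‖ ^ 2 := by
      have : y - s = (y - x) - (s - x) := by abel
      rw [← this]
      exact pow_lt_pow_left₀ hy (norm_nonneg _) (by norm_num)
    rw [norm_sub_sq_real] at h1
    nlinarith
  -- choose maximizer of the linear functional
  obtain ⟨a, haS, hamax⟩ := hcomp.exists_isMaxOn hne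
    ((continuous_const.inner continuous_id).continuousOn
      (f := fun z : EuclideanSpace ℝ (Fin d) => (inner ℝ (y - x) z : ℝ)))
  have hconv : convexHull ℝ S ⊆
      {z : EuclideanSpace ℝ (Fin d) | (inner ℝ (y - x) z : ℝ) ≤ inner ℝ (y - x) a} := by
    apply convexHull_min
    · exact fun z hz => hamax hz
    · exact convex_halfSpace_le
        ⟨fun p q => inner_add_right _ _ _, fun c p => real_inner_smul_right _ _ _⟩ _
  have hsa : (inner ℝ (y - x) s : ℝ) ≤ inner ℝ (y - x) a := hconv hs
  have har : ‖a - x‖ = r := by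
    have := hsub haS
    rwa [Metric.mem_sphere, dist_eq_norm] at this
  have hinner : (inner ℝ (y - x) (s - x) : ℝ) ≤ inner ℝ (y - x) (a - x) := by
    rw [inner_sub_right, inner_sub_right]
    linarith
  have hlt : dist y a < r := by
    rw [dist_eq_norm]
    have hsq : ‖y - a‖ ^ 2 < r ^ 2 := by
      have hya : y - a = (y - x) - (a - x) := by abel
      rw [hya, norm_sub_sq_real, har]
      nlinarith
    nlinarith [norm_nonneg (y - a)]
  exact lt_of_le_of_lt (Metric.infDist_le_dist_of_mem haS) hlt
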